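/- Let 𝔤 = 𝔤_{-k} ⊕ ⋯ ⊕ 𝔤_0 be a fundamental graded Lie algebra with an adapted Euclidean metric ⟨·,·⟩_𝔤, and equip 𝔥 = t*(𝔤) with the orthogonal-sum metric ⟨·,·⟩ (𝔤 ⊥ 𝔤*, induced metric on 𝔤*). If ⟨·,·⟩ is admissible, then ⟨·,·⟩_𝔤 is NOT Ad_{G_0}-invariant, where G_0 is the connected group with Lie algebra 𝔤_0. Equivalently: if ⟨·,·⟩_𝔤 is Ad_{G_0}-invariant, then ⟨·,·⟩ fails to be admissible. -/

import Mathlib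

open scoped RealInnerProductSpace

/-!
Statement 19: Let `𝔤 = 𝔤_{-k} ⊕ ⋯ ⊕ 𝔤_0` be a fundamental graded Lie algebra with an
adapted Euclidean metric `⟨·,·⟩_𝔤`, and equip `𝔥 = t^*(𝔤)` with the orthogonal-sum
metric. If this metric is admissible (equivalently, the `θ`-identity of Proposition
`criterion-adm` holds), then `⟨·,·⟩_𝔤` is NOT `Ad_{G_0}`-invariant; for the connected
group `G_0` with Lie algebra `𝔤_0`, `Ad_{G_0}`-invariance is expressed infinitesimally:
`⟪[A,x], y⟫ + ⟪x, [A,y]⟫ = 0` for all `A ∈ 𝔤_0`.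
-/

variable {G : Type*} [NormedAddCommGroup G] [InnerProductSpace ℝ G]
  [FiniteDimensional ℝ G] [LieRing G]

attribute [-instance] LieRing.toAddCommGroup

/-- The coadjoint action `L_X(α) = -α ∘ ad_X`. -/
noncomputable def coadAct (ad' : G → G →ₗ[ℝ] G) (x : G) (η : Module.Dual ℝ G) :
    Module.Dual ℝ G :=
  -(η ∘ₗ ad' x)

/-- The cotangent Lie bracket on `𝔥 = t^*(𝔤) = 𝔤 × 𝔤^*`. -/
noncomputable def ctBkt (ad' : G → G →ₗ[ℝ] G) (p q : G × Module.Dual ℝ G) :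
    G × Module.Dual ℝ G :=
  (⁅p.1, q.1⁆, coadAct ad' p.1 q.2 - coadAct ad' q.1 p.2)

/-- The musical isomorphism `♭ : 𝔤^* → 𝔤` of the metric. -/
noncomputable def flatG (α : Module.Dual ℝ G) : G :=
  (InnerProductSpace.toDual ℝ G).symm (LinearMap.toContinuousLinearMap α)

/-- The musical isomorphism `♯ : 𝔤 → 𝔤^*`, `X ↦ ⟪X, ·⟫`. -/
noncomputable def sharpG (x : G) : Module.Dual ℝ G :=
  ((innerSL ℝ x : G →L[ℝ] ℝ) : G →ₗ[ℝ] ℝ)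

/-- The involution `θ` of `𝔥 = 𝔤 × 𝔤^*` exchanging `𝔤` and `𝔤^*` via `♯`, `♭`. -/
noncomputable def thetaG (p : G × Module.Dual ℝ G) : G × Module.Dual ℝ G :=
  (flatG p.2, sharpG p.1)

set_option linter.unusedSectionVars false

lemma inner_flatG (η : Module.Dual ℝ G) (w : G) : ⟪flatG η, w⟫ = η w :=
  InnerProductSpace.toDual_symm_apply

lemma sharpG_apply (x w : G) : sharpG x w = ⟪x, w⟫ := rfl

lemma sharpG_zero : sharpG (0 : G) = 0 := by
  ext w; simp [sharpG]

lemma flatG_zero : flatG (0 : Module.Dual ℝ G) = 0 := by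
  apply ext_inner_right ℝ; intro v; rw [inner_flatG]; simp

lemma flatG_neg (η : Module.Dual ℝ G) : flatG (-η) = -flatG η := by
  apply ext_inner_right ℝ; intro v
  rw [inner_flatG, inner_neg_left, inner_flatG]; rfl

lemma flatG_sharpG (x : G) : flatG (sharpG x) = x := by
  apply ext_inner_right ℝ; intro v; rw [inner_flatG, sharpG_apply]

noncomputable def Sadj (ad' : G → G →ₗ[ℝ] G) (u a : G) : G :=
  flatG ((sharpG a) ∘ₗ ad' u)

lemma inner_Sadj (ad' : G → G →ₗ[ℝ] G) (u a w : G) :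
    ⟪Sadj ad' u a, w⟫ = ⟪a, ad' u w⟫ := by
  rw [Sadj, inner_flatG]; rfl

theorem admissible_implies_not_invariant
    (gr : ℤ → Submodule ℝ G)
    (hint : DirectSum.IsInternal gr)
    (hnonpos : ∀ i : ℤ, 0 < i → gr i = ⊥)
    (hbkt : ∀ i j : ℤ, ∀ x ∈ gr i, ∀ y ∈ gr j, ⁅x, y⁆ ∈ gr (i + j))
    -- the (ℝ-bilinear) bracket of `𝔤`, linear in the second argument:
    (ad' : G → G →ₗ[ℝ] G) (had' : ∀ x y : G, ad' x y = ⁅x, y⁆)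
    -- the metric on `𝔤` is adapted to the gradation:
    (horth : ∀ i j : ℤ, i ≠ j → ∀ x ∈ gr i, ∀ y ∈ gr j, ⟪x, y⟫ = 0)
    -- fundamentality: the action of `𝔤_0` on `𝔤_{-1}` is faithful, and `𝔤_0 ≠ 0`:
    (hfaith : ∀ A ∈ gr 0, (∀ v ∈ gr (-1), ⁅A, v⁆ = 0) → A = 0)
    (h0ne : gr 0 ≠ ⊥)
    -- admissibility of the orthogonal-sum metric of `𝔥 = t^*(𝔤)`, in its
    -- equivalent form (the `θ`-identity):
    (hadm : ∀ X ∈ gr 0, ∀ ξ : Module.Dual ℝ G, ∀ Y ∈ (⨆ i < (0 : ℤ), gr i),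
      ∀ r : G × Module.Dual ℝ G,
        thetaG (ctBkt ad' (X, ξ) (thetaG (ctBkt ad' (Y, 0) r))) =
          ctBkt ad' (thetaG (ctBkt ad' (X, 0) (thetaG (Y, 0)))) r +
            ctBkt ad' (Y, 0) (thetaG (ctBkt ad' (X, ξ) (thetaG r)))) :
    -- conclusion: the metric of `𝔤` is not `Ad_{G_0}`-invariant (infinitesimally):
    ¬ (∀ A ∈ gr 0, ∀ x y : G, ⟪⁅A, x⁆, y⟫ + ⟪x, ⁅A, y⁆⟫ = 0) := by
  intro hinv
  have lz : ∀ x : G, ⁅x, (0:G)⁆ = 0 := fun x => by rw [← had']; exact (ad' x).map_zero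
  -- key identity from admissibility
  have key : ∀ i : ℤ, i < 0 → ∀ Y ∈ gr i, ∀ a c : G,
      Sadj ad' (-(Sadj ad' Y c)) a = ⁅Y, Sadj ad' c a⁆ := by
    intro i hi Y hY a c
    have hYs : Y ∈ (⨆ j < (0:ℤ), gr j) :=
      (le_iSup₂ (f := fun (j:ℤ) (_ : j < 0) => gr j) i hi) hY
    have H := hadm 0 (zero_mem _) (sharpG a) Y hYs (0, sharpG c)
    simp only [ctBkt, coadAct, thetaG, sharpG_zero, flatG_zero, flatG_sharpG, flatG_neg,
      LinearMap.comp_zero, LinearMap.zero_comp, neg_zero, sub_zero, zero_sub, neg_neg,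
      Prod.mk_add_mk, add_zero, zero_add, lz, Prod.mk.injEq] at H
    simp only [Sadj]
    exact H.1
  -- orthogonality: an element orthogonal to all gr i, i ≠ 0, lies in gr 0
  have hKinner : ∀ x : G, (∀ i : ℤ, i ≠ 0 → ∀ w ∈ gr i, ⟪x, w⟫ = 0) →
      ∀ z ∈ (⨆ i : {i : ℤ // i ≠ (0:ℤ)}, gr i), ⟪x, z⟫ = 0 := by
    intro x hx z hz
    refine Submodule.iSup_induction' (fun i : {i : ℤ // i ≠ (0:ℤ)} => gr i)
      (motive := fun z _ => ⟪x, z⟫ = 0) ?_ ?_ ?_ hz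
    · intro i w hw; exact hx i i.2 w hw
    · simp
    · intro y z _ _ hy hz'; rw [inner_add_right, hy, hz']; norm_num
  have mem0 : ∀ x : G, (∀ i : ℤ, i ≠ 0 → ∀ w ∈ gr i, ⟪x, w⟫ = 0) → x ∈ gr 0 := by
    intro x hx
    have htop : x ∈ gr 0 ⊔ (⨆ i : {i : ℤ // i ≠ (0:ℤ)}, gr i) := by
      have h1 : (⊤ : Submodule ℝ G) ≤ gr 0 ⊔ (⨆ i : {i : ℤ // i ≠ (0:ℤ)}, gr i) := by
        rw [← hint.submodule_iSup_eq_top]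
        refine iSup_le fun i => ?_
        by_cases h : i = (0:ℤ)
        · subst h; exact le_sup_left
        · exact le_trans (le_iSup (fun j : {i : ℤ // i ≠ (0:ℤ)} => gr j) ⟨i, h⟩) le_sup_right
      exact h1 trivial
    obtain ⟨y, hy, z, hz, hxyz⟩ := Submodule.mem_sup.mp htop
    have hxz : ⟪x, z⟫ = 0 := hKinner x hx z hz
    have hyz : ⟪y, z⟫ = 0 :=
      hKinner y (fun i hi w hw => horth 0 i (Ne.symm hi) y hy w hw) z hz
    have hzz : ⟪z, z⟫ = (0:ℝ) := by
      rw [← hxyz, inner_add_left, hyz] at hxz; linarith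
    have hz0 : z = 0 := inner_self_eq_zero.mp hzz
    rw [← hxyz, hz0, add_zero]; exact hy
  -- Sadj of homogeneous negative elements lands in gr 0
  have SG0 : ∀ i : ℤ, i < 0 → ∀ Y ∈ gr i, ∀ c ∈ gr i, Sadj ad' Y c ∈ gr 0 := by
    intro i hi Y hY c hc
    apply mem0; intro m hm w hw
    rw [inner_Sadj, had']
    exact horth i (i+m) (by omega) c hc _ (hbkt i m Y hY w hw)
  -- the adjoint of ad' Y vanishes for homogeneous negative Y
  have Szero : ∀ i : ℤ, i < 0 → ∀ Y ∈ gr i, ∀ b : G, Sadj ad' Y b = 0 := by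
    intro i hi Y hY b
    have hC : -(Sadj ad' Y Y) ∈ gr 0 := neg_mem (SG0 i hi Y hY Y hY)
    have hk := key i hi Y hY b Y
    have h1 : ⟪b, ⁅-(Sadj ad' Y Y), b⁆⟫ = ⟪Sadj ad' Y b, Sadj ad' Y b⟫ := by
      have e1 : ⟪Sadj ad' (-(Sadj ad' Y Y)) b, b⟫ = ⟪b, ⁅-(Sadj ad' Y Y), b⁆⟫ := by
        rw [inner_Sadj, had']
      have e2 : ⟪(⁅Y, Sadj ad' Y b⁆ : G), b⟫ = ⟪Sadj ad' Y b, Sadj ad' Y b⟫ := by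
        rw [real_inner_comm, ← had', ← inner_Sadj]
      rw [← e1, hk, e2]
    have h2 : ⟪b, ⁅-(Sadj ad' Y Y), b⁆⟫ = 0 := by
      have ha := hinv _ hC b b
      have hc := real_inner_comm (⁅-(Sadj ad' Y Y), b⁆ : G) b
      linarith
    rw [h1] at h2
    exact inner_self_eq_zero.mp h2
  -- hence brackets with homogeneous negative first argument vanish
  have bkt0 : ∀ i : ℤ, i < 0 → ∀ Y ∈ gr i, ∀ w : G, ⁅Y, w⁆ = 0 := by
    intro i hi Y hY w
    have h := inner_Sadj ad' Y (⁅Y, w⁆) w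
    rw [Szero i hi Y hY, inner_zero_left, had'] at h
    exact inner_self_eq_zero.mp h.symm
  -- antisymmetry at a "central" element, via the LieRing structure
  have antis : ∀ x y : G, (∀ w : G, ⁅y, w⁆ = (0:G)) → ⁅x, y⁆ = (0:G) := by
    intro x y hy
    have hyy := hy y
    letI AG : AddCommGroup G := LieRing.toAddCommGroup
    have z0 := (LieRing.lie_self (L := G) y).symm.trans hyy
    have h := LieRing.lie_self (L := G) (x + y)
    rw [LieRing.add_lie, LieRing.lie_add, LieRing.lie_add, LieRing.lie_self,
      LieRing.lie_self, hy x, ← z0] at h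
    letI AZ : AddZeroClass G := @AddMonoid.toAddZeroClass G
      (@SubNegMonoid.toAddMonoid G (@AddGroup.toSubNegMonoid G (@AddCommGroup.toAddGroup G AG)))
    rw [@zero_add G AZ, @add_zero G AZ, @add_zero G AZ] at h
    exact h.trans z0
  -- conclude
  apply h0ne
  rw [eq_bot_iff]
  intro A hA
  have hA0 : A = 0 :=
    hfaith A hA (fun v hv => antis A v (fun w => bkt0 (-1) (by norm_num) v hv w))
  rw [hA0]; exact zero_mem _
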